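/- Let G be the graph P_{d+1} ⋄ W obtained from a path v_0 v_1 ⋯ v_d with d ≥ 7, d ≡ 1 (mod 3), by attaching, for each v_j ∈ W ⊆ {v_3, v_6, …, v_{d−4}} (indices divisible by 3), a new vertex u_j adjacent exactly to v_j and v_{j+1}. Then G has n = d + 1 + |W| vertices, diameter d, and m_G(−1) = n − d = |W| + 1. -/

import Mathlib

open SimpleGraph Matrix Module

-- Multiplicity of `μ` as an adjacency eigenvalue of `G` (0 if not an eigenvalue).
open scoped Classical in
noncomputable def eigMult {V : Type*} [Fintype V] (G : SimpleGraph V) (μ : ℝ) : ℕ :=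
  Module.finrank ℝ (Module.End.eigenspace (Matrix.toLin' (G.adjMatrix ℝ)) μ)

-- The set of adjacency eigenvalues of `G`.
open scoped Classical in
noncomputable def eigSet {V : Type*} [Fintype V] (G : SimpleGraph V) : Set ℝ :=
  {μ : ℝ | Module.End.HasEigenvalue (Matrix.toLin' (G.adjMatrix ℝ)) μ}

-- The graph `P_{d+1} ⋄ W`: the path `v_0 v_1 ⋯ v_d` together with, for each `j ∈ W`,
-- an extra vertex adjacent exactly to `v_j` and `v_{j+1}`.
def diamondGraph (d : ℕ) (W : Finset ℕ) : SimpleGraph (Fin (d + 1) ⊕ {j // j ∈ W}) :=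
  SimpleGraph.fromRel (fun a b =>
    match a, b with
    | Sum.inl i, Sum.inl k => (i : ℕ) + 1 = (k : ℕ)
    | Sum.inl i, Sum.inr j => (i : ℕ) = j.1 ∨ (i : ℕ) = j.1 + 1
    | _, _ => False)

variable {d : ℕ} {W : Finset ℕ}

lemma adj_ll {i k : Fin (d+1)} :
    (diamondGraph d W).Adj (Sum.inl i) (Sum.inl k) ↔ ((i:ℕ)+1 = k ∨ (k:ℕ)+1 = i) := by
  simp only [diamondGraph, fromRel_adj]
  constructor
  · rintro ⟨_, h | h⟩ <;> omega
  · intro h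
    refine ⟨?_, ?_⟩
    · intro he; cases he; omega
    · tauto

lemma adj_lr {i : Fin (d+1)} {j : {j // j ∈ W}} :
    (diamondGraph d W).Adj (Sum.inl i) (Sum.inr j) ↔ ((i:ℕ) = j ∨ (i:ℕ) = (j:ℕ)+1) := by
  simp only [diamondGraph, fromRel_adj]
  constructor
  · rintro ⟨_, h | h⟩
    · exact h
    · exact h.elim
  · intro h; exact ⟨by simp, Or.inl h⟩

lemma adj_rr {j j' : {j // j ∈ W}} : ¬ (diamondGraph d W).Adj (Sum.inr j) (Sum.inr j') := by
  simp [diamondGraph, fromRel_adj]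

lemma adj_rl {i : Fin (d+1)} {j : {j // j ∈ W}} :
    (diamondGraph d W).Adj (Sum.inr j) (Sum.inl i) ↔ ((i:ℕ) = j ∨ (i:ℕ) = (j:ℕ)+1) := by
  rw [adj_comm]; exact adj_lr

/-- coefficient pattern 1, -1, 0 of period 3 -/
noncomputable def cc (i : ℕ) : ℝ := if i % 3 = 0 then 1 else if i % 3 = 1 then -1 else 0

noncomputable def Bof (W : Finset ℕ) (b : {j // j ∈ W} → ℝ) (m : ℕ) : ℝ :=
  if h : m ∈ W then b ⟨m, h⟩ else 0

noncomputable def amp (W : Finset ℕ) (b : {j // j ∈ W} → ℝ) (i : ℕ) : ℝ :=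
  ∑ j : {j // j ∈ W}, if (j : ℕ) < i then b j else 0

noncomputable def XX (W : Finset ℕ) (a : ℝ) (b : {j // j ∈ W} → ℝ) (i : ℕ) : ℝ :=
  cc i * (a + amp W b i)

lemma amp_zero (b : {j // j ∈ W} → ℝ) : amp W b 0 = 0 := by simp [amp]

lemma sum_subtype_eq (y : {j // j ∈ W} → ℝ) (m : ℕ) :
    (∑ j : {j // j ∈ W}, if (j : ℕ) = m then y j else 0) =
      if h : m ∈ W then y ⟨m, h⟩ else 0 := by
  by_cases h : m ∈ W
  · rw [dif_pos h, Fintype.sum_eq_single (⟨m, h⟩ : {j // j ∈ W}), if_pos rfl]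
    intro j hj
    rw [if_neg]
    exact fun he => hj (Subtype.ext he)
  · rw [dif_neg h, Finset.sum_eq_zero]
    intro j _
    rw [if_neg]
    rintro rfl
    exact h j.2

lemma amp_succ (b : {j // j ∈ W} → ℝ) (i : ℕ) :
    amp W b (i+1) = amp W b i + Bof W b i := by
  rw [amp, amp, Bof, ← sum_subtype_eq (W := W) b i, ← Finset.sum_add_distrib]
  refine Finset.sum_congr rfl fun j _ => ?_
  by_cases h : (j:ℕ) = i
  · simp [h]
  · by_cases h2 : (j:ℕ) < i
    · rw [if_pos (by omega), if_pos h2, if_neg h, add_zero]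
    · rw [if_neg (by omega), if_neg h2, if_neg h, add_zero]

lemma XX_zero (a : ℝ) (b : {j // j ∈ W} → ℝ) : XX W a b 0 = a := by
  simp [XX, cc, amp_zero]

lemma XX_one (a : ℝ) (b : {j // j ∈ W} → ℝ) (h0 : Bof W b 0 = 0) : XX W a b 1 = -a := by
  simp [XX, cc, amp_succ, amp_zero, h0]

/-- the interior three-term identity -/
lemma XX_rec (a : ℝ) (b : {j // j ∈ W} → ℝ) (hb : ∀ k, k % 3 ≠ 0 → Bof W b k = 0) (m : ℕ) :
    XX W a b (m+2) = -XX W a b (m+1) - XX W a b m - Bof W b (m+1) - Bof W b m := by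
  have h3 : m % 3 = 0 ∨ m % 3 = 1 ∨ m % 3 = 2 := by omega
  rw [XX, XX, XX, amp_succ, amp_succ]
  rcases h3 with h | h | h
  · have e1 : (m+1) % 3 = 1 := by omega
    have e2 : (m+2) % 3 = 2 := by omega
    rw [hb (m+1) (by omega)]
    simp only [cc, h, e1, e2]
    norm_num
  · have e1 : (m+1) % 3 = 2 := by omega
    have e2 : (m+2) % 3 = 0 := by omega
    rw [hb (m+1) (by omega), hb m (by omega)]
    simp only [cc, h, e1, e2]
    norm_num
  · have e1 : (m+1) % 3 = 0 := by omega
    have e2 : (m+2) % 3 = 1 := by omega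
    rw [hb m (by omega)]
    simp only [cc, h, e1, e2]
    norm_num
    ring

/-- at the right end -/
lemma XX_end (a : ℝ) (b : {j // j ∈ W} → ℝ) (m : ℕ) (hm : m % 3 = 0) (h0 : Bof W b m = 0) :
    XX W a b (m+1) = -XX W a b m := by
  have e1 : (m+1) % 3 = 1 := by omega
  rw [XX, XX, amp_succ, h0]
  simp only [cc, hm, e1]
  norm_num

/-- the pendant-vertex identity -/
lemma XX_pendant (a : ℝ) (b : {j // j ∈ W} → ℝ) (j : {j // j ∈ W}) (hj : (j:ℕ) % 3 = 0) :
    XX W a b (j:ℕ) + XX W a b ((j:ℕ)+1) + b j = 0 := by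
  have e1 : ((j:ℕ)+1) % 3 = 1 := by omega
  have hB : Bof W b (j:ℕ) = b j := by rw [Bof, dif_pos j.2]
  rw [XX, XX, amp_succ, hB]
  simp only [cc, hj, e1, if_true, if_pos, Nat.one_ne_zero, if_false]
  ring

open scoped Classical

noncomputable def psi (d : ℕ) (W : Finset ℕ) (a : ℝ) (b : {j // j ∈ W} → ℝ) :
    (Fin (d + 1) ⊕ {j // j ∈ W}) → ℝ
  | .inl i => XX W a b i
  | .inr j => b j

/-- `x` on the path, indexed by ℕ, extended by `0`. -/
noncomputable def xN (d : ℕ) (W : Finset ℕ) (x : (Fin (d + 1) ⊕ {j // j ∈ W}) → ℝ) (m : ℕ) : ℝ :=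
  if h : m < d + 1 then x (Sum.inl ⟨m, h⟩) else 0

/-- `x` on the pendant vertices, indexed by ℕ, extended by `0`. -/
noncomputable def bN (d : ℕ) (W : Finset ℕ) (x : (Fin (d + 1) ⊕ {j // j ∈ W}) → ℝ) (m : ℕ) : ℝ :=
  if h : m ∈ W then x (Sum.inr ⟨m, h⟩) else 0

lemma sum_range_eq_single (n : ℕ) (y : ℕ → ℝ) (a : ℕ) (hy : ∀ m, n ≤ m → y m = 0) :
    ∑ m ∈ Finset.range n, (if m = a then y m else 0) = y a := by
  by_cases h : a < n
  · rw [Finset.sum_ite_eq' (Finset.range n) a y, if_pos (Finset.mem_range.2 h)]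
  · rw [Finset.sum_ite_eq' (Finset.range n) a y, if_neg (by simp; omega), hy a (by omega)]

/-- computation of the adjacency sum at a path vertex -/
lemma sum_inl (x : (Fin (d + 1) ⊕ {j // j ∈ W}) → ℝ) (i : Fin (d + 1)) :
    (∑ u, if (diamondGraph d W).Adj (Sum.inl i) u then x u else 0) =
      xN d W x ((i:ℕ)+1) + (if 1 ≤ (i:ℕ) then xN d W x ((i:ℕ)-1) else 0)
        + bN d W x (i:ℕ) + (if 1 ≤ (i:ℕ) then bN d W x ((i:ℕ)-1) else 0) := by
  rw [Fintype.sum_sum_type]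
  have h1 : (∑ k : Fin (d+1), if (diamondGraph d W).Adj (Sum.inl i) (Sum.inl k)
      then x (Sum.inl k) else 0) =
      xN d W x ((i:ℕ)+1) + (if 1 ≤ (i:ℕ) then xN d W x ((i:ℕ)-1) else 0) := by
    have e : ∀ k : Fin (d+1), (if (diamondGraph d W).Adj (Sum.inl i) (Sum.inl k)
        then x (Sum.inl k) else 0) =
        (if (k:ℕ) = (i:ℕ)+1 then xN d W x (k:ℕ) else 0)
          + (if (k:ℕ)+1 = (i:ℕ) then xN d W x (k:ℕ) else 0) := by
      intro k
      have hk : xN d W x (k:ℕ) = x (Sum.inl k) := by rw [xN, dif_pos k.isLt]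
      rw [adj_ll]
      by_cases h : (i:ℕ)+1 = (k:ℕ)
      · rw [if_pos (Or.inl h), if_pos h.symm, if_neg (by omega), hk, add_zero]
      · by_cases h2 : (k:ℕ)+1 = (i:ℕ)
        · rw [if_pos (Or.inr h2), if_neg (by omega), if_pos h2, hk, zero_add]
        · rw [if_neg (by tauto), if_neg (by omega), if_neg h2, add_zero]
    rw [Finset.sum_congr rfl (fun k _ => e k), Finset.sum_add_distrib]
    have hz : ∀ m, d + 1 ≤ m → xN d W x m = 0 := fun m hm => dif_neg (by omega)
    have r1 : (∑ k : Fin (d+1), if (k:ℕ) = (i:ℕ)+1 then xN d W x (k:ℕ) else 0)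
        = xN d W x ((i:ℕ)+1) := by
      rw [Fin.sum_univ_eq_sum_range (fun m => if m = (i:ℕ)+1 then xN d W x m else 0)]
      exact sum_range_eq_single _ _ _ hz
    have r2 : (∑ k : Fin (d+1), if (k:ℕ)+1 = (i:ℕ) then xN d W x (k:ℕ) else 0)
        = if 1 ≤ (i:ℕ) then xN d W x ((i:ℕ)-1) else 0 := by
      rw [Fin.sum_univ_eq_sum_range (fun m => if m+1 = (i:ℕ) then xN d W x m else 0)]
      by_cases hi : 1 ≤ (i:ℕ)
      · rw [if_pos hi]
        have : ∀ m, (m + 1 = (i:ℕ)) = (m = (i:ℕ)-1) := fun m => propext (by omega)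
        simp only [this]
        exact sum_range_eq_single _ _ _ hz
      · rw [if_neg hi, Finset.sum_eq_zero]
        intro m _
        rw [if_neg (by omega)]
    rw [r1, r2]
  have h2 : (∑ j : {j // j ∈ W}, if (diamondGraph d W).Adj (Sum.inl i) (Sum.inr j)
      then x (Sum.inr j) else 0) =
      bN d W x (i:ℕ) + (if 1 ≤ (i:ℕ) then bN d W x ((i:ℕ)-1) else 0) := by
    have e : ∀ j : {j // j ∈ W}, (if (diamondGraph d W).Adj (Sum.inl i) (Sum.inr j)
        then x (Sum.inr j) else 0) =
        (if (j:ℕ) = (i:ℕ) then x (Sum.inr j) else 0)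
          + (if 1 ≤ (i:ℕ) then (if (j:ℕ) = (i:ℕ)-1 then x (Sum.inr j) else 0) else 0) := by
      intro j
      rw [adj_lr]
      by_cases hi : 1 ≤ (i:ℕ)
      · rw [if_pos hi]
        by_cases h : (i:ℕ) = j
        · rw [if_pos (Or.inl h), if_pos h.symm, if_neg (by omega), add_zero]
        · by_cases h2 : (i:ℕ) = (j:ℕ)+1
          · rw [if_pos (Or.inr h2), if_neg (by omega), if_pos (by omega), zero_add]
          · rw [if_neg (by tauto), if_neg (by omega), if_neg (by omega), add_zero]
      · rw [if_neg hi, add_zero]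
        by_cases h : (i:ℕ) = j
        · rw [if_pos (Or.inl h), if_pos h.symm]
        · rw [if_neg (by omega), if_neg (by omega)]
    rw [Finset.sum_congr rfl (fun j _ => e j), Finset.sum_add_distrib]
    have r1 : (∑ j : {j // j ∈ W}, if (j:ℕ) = (i:ℕ) then x (Sum.inr j) else 0)
        = bN d W x (i:ℕ) := sum_subtype_eq _ _
    have r2 : (∑ j : {j // j ∈ W}, if 1 ≤ (i:ℕ) then
          (if (j:ℕ) = (i:ℕ)-1 then x (Sum.inr j) else 0) else 0)
        = if 1 ≤ (i:ℕ) then bN d W x ((i:ℕ)-1) else 0 := by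
      by_cases hi : 1 ≤ (i:ℕ)
      · simp only [if_pos hi]; exact sum_subtype_eq _ _
      · simp only [if_neg hi, Finset.sum_const_zero]
    rw [r1, r2]
  rw [h1, h2]
  ring

/-- computation of the adjacency sum at a pendant vertex -/
lemma sum_inr (x : (Fin (d + 1) ⊕ {j // j ∈ W}) → ℝ) (j : {j // j ∈ W}) :
    (∑ u, if (diamondGraph d W).Adj (Sum.inr j) u then x u else 0) =
      xN d W x (j:ℕ) + xN d W x ((j:ℕ)+1) := by
  rw [Fintype.sum_sum_type]
  have h2 : (∑ j' : {j // j ∈ W}, if (diamondGraph d W).Adj (Sum.inr j) (Sum.inr j')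
      then x (Sum.inr j') else 0) = 0 := by
    refine Finset.sum_eq_zero fun j' _ => if_neg adj_rr
  have hz : ∀ m, d + 1 ≤ m → xN d W x m = 0 := fun m hm => dif_neg (by omega)
  have e : ∀ k : Fin (d+1), (if (diamondGraph d W).Adj (Sum.inr j) (Sum.inl k)
      then x (Sum.inl k) else 0) =
      (if (k:ℕ) = (j:ℕ) then xN d W x (k:ℕ) else 0)
        + (if (k:ℕ) = (j:ℕ)+1 then xN d W x (k:ℕ) else 0) := by
    intro k
    have hk : xN d W x (k:ℕ) = x (Sum.inl k) := by rw [xN, dif_pos k.isLt]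
    rw [adj_rl]
    by_cases h : (k:ℕ) = (j:ℕ)
    · rw [if_pos (Or.inl h), if_pos h, if_neg (by omega), hk, add_zero]
    · by_cases h2 : (k:ℕ) = (j:ℕ)+1
      · rw [if_pos (Or.inr h2), if_neg h, if_pos h2, hk, zero_add]
      · rw [if_neg (by tauto), if_neg h, if_neg h2, add_zero]
  rw [Finset.sum_congr rfl (fun k _ => e k), Finset.sum_add_distrib, h2]
  rw [Fin.sum_univ_eq_sum_range (fun m => if m = (j:ℕ) then xN d W x m else 0),
    Fin.sum_univ_eq_sum_range (fun m => if m = (j:ℕ)+1 then xN d W x m else 0),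
    sum_range_eq_single _ _ _ hz, sum_range_eq_single _ _ _ hz, add_zero]

lemma bN_psi (a : ℝ) (b : {j // j ∈ W} → ℝ) : bN d W (psi d W a b) = Bof W b := by
  funext m
  rw [bN, Bof]
  split <;> rfl

lemma xN_psi (a : ℝ) (b : {j // j ∈ W} → ℝ) (m : ℕ) (hm : m < d + 1) :
    xN d W (psi d W a b) m = XX W a b m := by
  rw [xN, dif_pos hm]; rfl

lemma xN_psi' (a : ℝ) (b : {j // j ∈ W} → ℝ) (m : ℕ) (hm : d + 1 ≤ m) :
    xN d W (psi d W a b) m = 0 := dif_neg (by omega)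

section main
variable (hd : 7 ≤ d) (hmod : d % 3 = 1) (hW : ∀ j ∈ W, j % 3 = 0 ∧ 3 ≤ j ∧ j ≤ d - 4)
include hd hmod hW

lemma Bof_zero (b : {j // j ∈ W} → ℝ) : ∀ k, k % 3 ≠ 0 ∨ k = 0 ∨ d - 3 ≤ k → Bof W b k = 0 := by
  intro k hk
  rw [Bof, dif_neg]
  intro hkW
  have := hW k hkW
  omega

lemma psi_mem (a : ℝ) (b : {j // j ∈ W} → ℝ) :
    ∀ v, (∑ u, if (diamondGraph d W).Adj v u then psi d W a b u else 0) = - psi d W a b v := by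
  have hb : ∀ k, k % 3 ≠ 0 → Bof W b k = 0 := fun k h => Bof_zero hd hmod hW b k (Or.inl h)
  rintro (i | j)
  · rw [sum_inl, bN_psi]
    have hid : (i:ℕ) ≤ d := by omega
    show _ = -XX W a b (i:ℕ)
    rcases Nat.lt_or_ge (i:ℕ) 1 with hi | hi
    · have h0 : (i:ℕ) = 0 := by omega
      rw [h0, if_neg (by omega), if_neg (by omega), xN_psi a b 1 (by omega),
        XX_one a b (Bof_zero hd hmod hW b 0 (by omega)),
        Bof_zero hd hmod hW b 0 (by omega), XX_zero]
      ring
    · obtain ⟨m, hm⟩ : ∃ m, (i:ℕ) = m + 1 := ⟨(i:ℕ) - 1, by omega⟩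
      rcases Nat.lt_or_ge (i:ℕ) d with hlt | hge
      · rw [hm, if_pos (by omega), if_pos (by omega), Nat.add_sub_cancel,
          xN_psi a b (m+1+1) (by omega), xN_psi a b m (by omega),
          XX_rec a b (fun k h => Bof_zero hd hmod hW b k (Or.inl h)) m]
        ring
      · have hid2 : (i:ℕ) = d := by omega
        rw [hid2, if_pos (by omega), if_pos (by omega), xN_psi' a b (d+1) (by omega),
          xN_psi a b (d-1) (by omega),
          Bof_zero hd hmod hW b d (by omega),
          Bof_zero hd hmod hW b (d-1) (by omega)]
        have hd1 : d - 1 + 1 = d := by omega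
        have := XX_end (W := W) a b (d-1) (by omega)
          (Bof_zero hd hmod hW b (d-1) (by omega))
        rw [hd1] at this
        rw [this]
        ring
  · rw [sum_inr]
    obtain ⟨h3, h3le, h4⟩ := hW j j.2
    rw [xN_psi a b (j:ℕ) (by omega), xN_psi a b ((j:ℕ)+1) (by omega)]
    have := XX_pendant a b j h3
    show _ = -b j
    linarith

lemma psi_unique (x : (Fin (d + 1) ⊕ {j // j ∈ W}) → ℝ)
    (hx : ∀ v, (∑ u, if (diamondGraph d W).Adj v u then x u else 0) = - x v) :
    x = psi d W (x (Sum.inl ⟨0, Nat.succ_pos d⟩)) (fun j => x (Sum.inr j)) := by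
  set a := x (Sum.inl ⟨0, Nat.succ_pos d⟩) with ha
  set b : {j // j ∈ W} → ℝ := fun j => x (Sum.inr j) with hbdef
  have hbN : bN d W x = Bof W b := by
    funext m
    rw [bN, Bof]
  have hb : ∀ k, k % 3 ≠ 0 → Bof W b k = 0 := fun k h => Bof_zero hd hmod hW b k (Or.inl h)
  have key : ∀ m, m ≤ d → xN d W x m = XX W a b m := by
    intro m
    induction m using Nat.strong_induction_on with
    | _ m ih =>
      match m with
      | 0 =>
        intro _
        rw [XX_zero, xN, dif_pos (Nat.succ_pos d)]
      | 1 =>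
        intro h1
        have h0 := hx (Sum.inl ⟨0, Nat.succ_pos d⟩)
        rw [sum_inl, hbN] at h0
        have hv0 : (((⟨0, Nat.succ_pos d⟩ : Fin (d+1))) : ℕ) = 0 := rfl
        rw [hv0] at h0
        have hB0 : Bof W b 0 = 0 := Bof_zero hd hmod hW b 0 (by omega)
        rw [if_neg (by omega), if_neg (by omega), hB0] at h0
        rw [XX_one a b hB0]
        linarith [h0]
      | (k+2) =>
        intro hk
        have hlt : k + 1 < d + 1 := by omega
        have h0 := hx (Sum.inl ⟨k+1, hlt⟩)
        rw [sum_inl, hbN] at h0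
        have hv : ((⟨k+1, hlt⟩ : Fin (d+1)) : ℕ) = k + 1 := rfl
        rw [hv] at h0
        simp only [if_pos (by omega : 1 ≤ k+1), Nat.add_sub_cancel] at h0
        have hx1 : x (Sum.inl ⟨k+1, hlt⟩) = xN d W x (k+1) := by rw [xN, dif_pos hlt]
        rw [hx1, ih (k+1) (by omega) (by omega), ih k (by omega) (by omega)] at h0
        rw [XX_rec a b hb k]
        linarith [h0]
  funext v
  rcases v with i | j
  · have : x (Sum.inl i) = xN d W x (i:ℕ) := by
      rw [xN, dif_pos i.isLt]
    rw [this, key (i:ℕ) (by omega)]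
    rfl
  · rfl

omit hd hmod hW in
lemma mem_eig_iff (x : (Fin (d + 1) ⊕ {j // j ∈ W}) → ℝ) :
    x ∈ Module.End.eigenspace (Matrix.toLin' ((diamondGraph d W).adjMatrix ℝ)) (-1) ↔
      ∀ v, (∑ u, if (diamondGraph d W).Adj v u then x u else 0) = - x v := by
  rw [Module.End.mem_eigenspace_iff, Matrix.toLin'_apply, funext_iff]
  apply forall_congr'
  intro v
  simp [Matrix.mulVec, dotProduct, adjMatrix_apply, ite_mul]

lemma eig_finrank :
    finrank ℝ (Module.End.eigenspace (Matrix.toLin' ((diamondGraph d W).adjMatrix ℝ))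
      (-1 : ℝ)) = W.card + 1 := by
  set E := Module.End.eigenspace (Matrix.toLin' ((diamondGraph d W).adjMatrix ℝ)) (-1 : ℝ)
    with hE
  let Φ : ((Fin (d + 1) ⊕ {j // j ∈ W}) → ℝ) →ₗ[ℝ] ℝ × ({j // j ∈ W} → ℝ) :=
    { toFun := fun x => (x (Sum.inl ⟨0, Nat.succ_pos d⟩), fun j => x (Sum.inr j))
      map_add' := fun x y => rfl
      map_smul' := fun c x => rfl }
  have hbij : Function.Bijective (Φ.comp E.subtype) := by
    constructor
    · rintro ⟨x, hx⟩ ⟨y, hy⟩ h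
      obtain ⟨h1, h2⟩ := Prod.ext_iff.1 h
      apply Subtype.ext
      show x = y
      rw [psi_unique hd hmod hW x ((mem_eig_iff x).1 hx),
        psi_unique hd hmod hW y ((mem_eig_iff y).1 hy)]
      have h1' : x (Sum.inl ⟨0, Nat.succ_pos d⟩) = y (Sum.inl ⟨0, Nat.succ_pos d⟩) := h1
      have h2' : (fun j => x (Sum.inr j)) = (fun j => y (Sum.inr j)) := h2
      rw [h1', h2']
    · rintro ⟨a, b⟩
      refine ⟨⟨psi d W a b, (mem_eig_iff _).2 (psi_mem hd hmod hW a b)⟩, ?_⟩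
      have h1 : psi d W a b (Sum.inl ⟨0, Nat.succ_pos d⟩) = a := XX_zero a b
      exact Prod.ext h1 rfl
  rw [(LinearEquiv.ofBijective (Φ.comp E.subtype) hbij).finrank_eq,
    Module.finrank_prod, Module.finrank_self, Module.finrank_pi, Fintype.card_coe]
  omega
end main

/-! ### Diameter -/

def proj : (Fin (d + 1) ⊕ {j // j ∈ W}) → ℕ := Sum.elim (fun i => (i:ℕ)) (fun j => (j:ℕ))

lemma adj_proj {u v : Fin (d + 1) ⊕ {j // j ∈ W}} (h : (diamondGraph d W).Adj u v) :
    proj v ≤ proj u + 1 ∧ proj u ≤ proj v + 1 := by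
  rcases u with i | j <;> rcases v with k | j'
  · rw [adj_ll] at h; simp only [proj, Sum.elim_inl]; omega
  · rw [adj_lr] at h; simp only [proj, Sum.elim_inl, Sum.elim_inr]; omega
  · rw [adj_rl] at h; simp only [proj, Sum.elim_inl, Sum.elim_inr]; omega
  · exact absurd h adj_rr

lemma walk_proj {u v : Fin (d + 1) ⊕ {j // j ∈ W}} (w : (diamondGraph d W).Walk u v) :
    proj v ≤ proj u + w.length ∧ proj u ≤ proj v + w.length := by
  induction w with
  | nil => simp
  | cons h p ih =>
    have := adj_proj h
    rw [SimpleGraph.Walk.length_cons]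
    omega

lemma edist_le_of_eq_add (n : ℕ) : ∀ (a b : Fin (d+1)), (b:ℕ) = (a:ℕ) + n →
    (diamondGraph d W).edist (Sum.inl a) (Sum.inl b) ≤ n := by
  induction n with
  | zero =>
    intro a b hb
    have : a = b := Fin.ext (by omega)
    rw [this, SimpleGraph.edist_self]
    exact zero_le
  | succ n ih =>
    intro a b hb
    have hc : (a:ℕ) + n < d + 1 := by omega
    set c : Fin (d+1) := ⟨(a:ℕ) + n, hc⟩ with hcdef
    have h1 : (diamondGraph d W).edist (Sum.inl a) (Sum.inl c) ≤ n := ih a c rfl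
    have hadj : (diamondGraph d W).Adj (Sum.inl c) (Sum.inl b) := by
      rw [adj_ll]; left; simp only [hcdef, hb]; omega
    have h2 : (diamondGraph d W).edist (Sum.inl c) (Sum.inl b) ≤ 1 := by
      rw [SimpleGraph.edist_eq_one_iff_adj.2 hadj]
    calc (diamondGraph d W).edist (Sum.inl a) (Sum.inl b)
        ≤ _ + _ := SimpleGraph.edist_triangle (v := Sum.inl c)
      _ ≤ (n : ℕ∞) + 1 := add_le_add h1 h2
      _ = ((n+1 : ℕ) : ℕ∞) := by push_cast; ring

lemma edist_ll (a b : Fin (d+1)) :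
    (diamondGraph d W).edist (Sum.inl a) (Sum.inl b) ≤ (((b:ℕ) - a + ((a:ℕ) - b) : ℕ) : ℕ∞) := by
  rcases le_total (a:ℕ) (b:ℕ) with h | h
  · have := edist_le_of_eq_add (W := W) ((b:ℕ) - a) a b (by omega)
    calc (diamondGraph d W).edist (Sum.inl a) (Sum.inl b) ≤ _ := this
      _ ≤ _ := by rw [Nat.cast_le]; omega
  · rw [SimpleGraph.edist_comm]
    have := edist_le_of_eq_add (W := W) ((a:ℕ) - b) b a (by omega)
    calc (diamondGraph d W).edist (Sum.inl b) (Sum.inl a) ≤ _ := this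
      _ ≤ _ := by rw [Nat.cast_le]; omega

section diam
variable (hd : 7 ≤ d) (hmod : d % 3 = 1) (hW : ∀ j ∈ W, j % 3 = 0 ∧ 3 ≤ j ∧ j ≤ d - 4)
include hd hW

lemma edist_all (u v : Fin (d + 1) ⊕ {j // j ∈ W}) :
    (diamondGraph d W).edist u v ≤ (d : ℕ∞) := by
  have hpend : ∀ j : {j // j ∈ W}, ∀ h : (j:ℕ) < d + 1,
      (diamondGraph d W).edist (Sum.inr j) (Sum.inl ⟨(j:ℕ), h⟩) ≤ 1 := by
    intro j h
    rw [SimpleGraph.edist_eq_one_iff_adj.2 (by rw [adj_rl]; left; rfl)]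
  rcases u with a | j <;> rcases v with b | j'
  · calc (diamondGraph d W).edist (Sum.inl a) (Sum.inl b) ≤ _ := edist_ll a b
      _ ≤ (d : ℕ∞) := by rw [Nat.cast_le]; omega
  · obtain ⟨h3, h3le, h4⟩ := hW j' j'.2
    have hj : (j':ℕ) < d + 1 := by omega
    calc (diamondGraph d W).edist (Sum.inl a) (Sum.inr j')
        ≤ _ + _ := SimpleGraph.edist_triangle (v := Sum.inl ⟨(j':ℕ), hj⟩)
      _ ≤ ((((⟨(j':ℕ), hj⟩ : Fin (d+1)):ℕ) - a + ((a:ℕ) - (⟨(j':ℕ), hj⟩ : Fin (d+1))) : ℕ) : ℕ∞)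
          + 1 := by
        refine add_le_add (edist_ll a _) ?_
        rw [SimpleGraph.edist_comm]
        exact hpend j' hj
      _ ≤ (d : ℕ∞) := by
        have : ((j':ℕ) - (a:ℕ) + ((a:ℕ) - (j':ℕ))) + 1 ≤ d := by omega
        calc _ = ((((j':ℕ) - (a:ℕ) + ((a:ℕ) - (j':ℕ))) + 1 : ℕ) : ℕ∞) := by push_cast; rfl
          _ ≤ (d : ℕ∞) := Nat.cast_le.2 this
  · obtain ⟨h3, h3le, h4⟩ := hW j j.2
    have hj : (j:ℕ) < d + 1 := by omega
    calc (diamondGraph d W).edist (Sum.inr j) (Sum.inl b)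
        ≤ _ + _ := SimpleGraph.edist_triangle (v := Sum.inl ⟨(j:ℕ), hj⟩)
      _ ≤ 1 + ((((b:ℕ) - (⟨(j:ℕ), hj⟩ : Fin (d+1)) +
            (((⟨(j:ℕ), hj⟩ : Fin (d+1)):ℕ) - b)) : ℕ) : ℕ∞) :=
        add_le_add (hpend j hj) (edist_ll _ b)
      _ ≤ (d : ℕ∞) := by
        have : ((b:ℕ) - (j:ℕ) + ((j:ℕ) - (b:ℕ))) + 1 ≤ d := by omega
        calc _ = ((1 + ((b:ℕ) - (j:ℕ) + ((j:ℕ) - (b:ℕ))) : ℕ) : ℕ∞) := by push_cast; rfl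
          _ ≤ (d : ℕ∞) := Nat.cast_le.2 (by omega)
  · obtain ⟨h3, h3le, h4⟩ := hW j j.2
    obtain ⟨h3', h3le', h4'⟩ := hW j' j'.2
    have hj : (j:ℕ) < d + 1 := by omega
    have hj' : (j':ℕ) < d + 1 := by omega
    calc (diamondGraph d W).edist (Sum.inr j) (Sum.inr j')
        ≤ _ + _ := SimpleGraph.edist_triangle (v := Sum.inl ⟨(j:ℕ), hj⟩)
      _ ≤ 1 + ((diamondGraph d W).edist (Sum.inl ⟨(j:ℕ), hj⟩) (Sum.inr j')) :=
        add_le_add (hpend j hj) le_rfl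
      _ ≤ 1 + ((diamondGraph d W).edist (Sum.inl ⟨(j:ℕ), hj⟩) (Sum.inl ⟨(j':ℕ), hj'⟩)
            + (diamondGraph d W).edist (Sum.inl ⟨(j':ℕ), hj'⟩) (Sum.inr j')) :=
        add_le_add le_rfl (SimpleGraph.edist_triangle)
      _ ≤ 1 + (((((j':ℕ) - (j:ℕ) + ((j:ℕ) - (j':ℕ))) : ℕ) : ℕ∞) + 1) := by
        refine add_le_add le_rfl (add_le_add (edist_ll _ _) ?_)
        rw [SimpleGraph.edist_comm]
        exact hpend j' hj'
      _ ≤ (d : ℕ∞) := by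
        calc _ = ((1 + (((j':ℕ) - (j:ℕ) + ((j:ℕ) - (j':ℕ))) + 1) : ℕ) : ℕ∞) := by
              push_cast; rfl
          _ ≤ (d : ℕ∞) := Nat.cast_le.2 (by omega)

lemma ediam_eq : (diamondGraph d W).ediam = (d : ℕ∞) := by
  refine le_antisymm (SimpleGraph.ediam_le_of_edist_le (edist_all hd hW)) ?_
  have hlt : d < d + 1 := by omega
  have hlow : (d : ℕ∞) ≤ (diamondGraph d W).edist (Sum.inl ⟨0, Nat.succ_pos d⟩)
      (Sum.inl ⟨d, hlt⟩) := by
    rw [SimpleGraph.edist_eq_sInf]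
    refine le_sInf ?_
    rintro _ ⟨w, rfl⟩
    rw [Nat.cast_le]
    have := walk_proj w
    simp only [proj, Sum.elim_inl] at this
    omega
  exact le_trans hlow SimpleGraph.edist_le_ediam

lemma diam_eq : (diamondGraph d W).diam = d := by
  rw [SimpleGraph.diam, ediam_eq hd hW]
  exact ENat.toNat_coe d
end diam

theorem diamond_eigMult_neg_one (d : ℕ) (hd : 7 ≤ d) (hmod : d % 3 = 1) (W : Finset ℕ)
    (hW : ∀ j ∈ W, j % 3 = 0 ∧ 3 ≤ j ∧ j ≤ d - 4) :
    Fintype.card (Fin (d + 1) ⊕ {j // j ∈ W}) = d + 1 + W.card ∧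
    (diamondGraph d W).diam = d ∧
    eigMult (diamondGraph d W) (-1) = W.card + 1 := by
  refine ⟨?_, ?_, ?_⟩
  · simp [Fintype.card_sum, Fintype.card_coe]
  · exact diam_eq hd hW
  · unfold eigMult
    exact eig_finrank hd hmod hW
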